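/- Let 1 ≤ s ≤ n, let S be an s-dimensional subspace of F_q^{2n}, and let P be a 1-dimensional subspace with P ≤ S. Define χ^i_P on chambers as usual (value q^i if P ≤ C_n, P ≰ C_{n-i}; value -1 if P ≤ C_{n+i}, P ≰ C_n; 0 otherwise) and v_S(C) = q^{s(2n-s)-n} if C_s = S, 1 if S ∩ C_{2n-s} = {0}, 0 otherwise. Then v_Sᵀ χ^i_P = 0 for every i ∈ {1,...,n}. -/

import Mathlib

open Module Finset
open scoped Classical

/-- A chamber of a `c`-dimensional vector space, encoded as an increasing chain
`f : ℕ → Submodule K V` with `finrank (f i) = i` for `i ≤ c` and `f i = ⊤` for `i ≥ c`. -/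
def IsChamber (K : Type*) {V : Type*} [Field K] [AddCommGroup V] [Module K V]
    (c : ℕ) (f : ℕ → Submodule K V) : Prop :=
  Monotone f ∧ (∀ i ≤ c, Module.finrank K (f i) = i) ∧ ∀ i, c ≤ i → f i = ⊤

/-- The type of chambers of `V`, `dim V = c`. -/
abbrev Chamber (K V : Type*) [Field K] [AddCommGroup V] [Module K V] (c : ℕ) :=
  {f : ℕ → Submodule K V // IsChamber K c f}

/-- Two chambers are opposite if `C_i ∩ D_{c-i} = 0` for `1 ≤ i ≤ c - 1`. -/
def OppositeChambers (K : Type*) {V : Type*} [Field K] [AddCommGroup V] [Module K V]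
    (c : ℕ) (f g : ℕ → Submodule K V) : Prop :=
  ∀ i, 1 ≤ i → i ≤ c - 1 → f i ⊓ g (c - i) = ⊥

/-- `z_c(q) = ∏_{i=1}^c (q^i - 1) / (q-1)`, the number of chambers of `𝔽_q^c`. -/
def zNat (q c : ℕ) : ℕ := (∏ i ∈ Finset.Icc 1 c, (q ^ i - 1)) / (q - 1) ^ c

/-- The Gaussian binomial coefficient `[b choose a]_q`. -/
def gaussNat (q b a : ℕ) : ℕ :=
  (∏ i ∈ Finset.Icc 1 a, (q ^ (b - a + i) - 1)) / ∏ i ∈ Finset.Icc 1 a, (q ^ i - 1)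

set_option linter.unusedSectionVars false
set_option linter.unusedVariables false

namespace ChamberProof
variable {K V : Type*} [Field K] [AddCommGroup V] [Module K V]
theorem chamber_mono {c} (C : Chamber K V c) : Monotone C.1 := C.2.1
theorem chamber_finrank {c} (C : Chamber K V c) {j} (h : j ≤ c) :
    finrank K (C.1 j) = j := C.2.2.1 j h
theorem chamber_top {c} (C : Chamber K V c) {j} (h : c ≤ j) : C.1 j = ⊤ := C.2.2.2 j h
theorem chamber_bot [FiniteDimensional K V] {c} (C : Chamber K V c) : C.1 0 = ⊥ := by
  have := chamber_finrank C (Nat.zero_le c)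
  exact Submodule.finrank_eq_zero.mp this

instance finite_submodule' [Fintype K] [FiniteDimensional K V] : Finite (Submodule K V) := by
  have : Finite V := Module.finite_of_finite K
  exact Finite.of_injective (fun p : Submodule K V => (p : Set V)) SetLike.coe_injective

instance finite_chamber [Fintype K] [FiniteDimensional K V] (c : ℕ) :
    Finite (Chamber K V c) := by
  have : Finite V := Module.finite_of_finite K
  apply Finite.of_injective (fun C : Chamber K V c => (fun j : Fin (c+1) => C.1 j))
  intro C D h
  apply Subtype.ext; funext j
  rcases le_or_gt j c with hj | hj
  · simpa using congrFun h ⟨j, by omega⟩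
  · rw [chamber_top C hj.le, chamber_top D hj.le]

theorem finrank_map_mkQ [FiniteDimensional K V] {W p : Submodule K V} (h : W ≤ p) :
    finrank K (p.map W.mkQ) + finrank K W = finrank K p := by
  have h1 := LinearMap.finrank_range_add_finrank_ker (W.mkQ.domRestrict p)
  rwa [LinearMap.range_domRestrict, LinearMap.ker_domRestrict, Submodule.ker_mkQ,
    (Submodule.comapSubtypeEquivOfLe h).finrank_eq] at h1
theorem finrank_comap_mkQ [FiniteDimensional K V] (W : Submodule K V)
    (b : Submodule K (V ⧸ W)) :
    finrank K (b.comap W.mkQ) = finrank K b + finrank K W := by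
  have h1 := finrank_map_mkQ (Submodule.le_comap_mkQ W b)
  rw [Submodule.map_comap_eq_of_surjective (Submodule.mkQ_surjective W) b] at h1
  omega

variable [FiniteDimensional K V]

/-- Splitting a chamber with `C_w = W` into a chamber of `W` and a chamber of `V ⧸ W`. -/
noncomputable def chamberSplit (W : Submodule K V) {w m : ℕ} (hw : finrank K W = w)
    (hm : finrank K V = m) (hwm : w ≤ m) :
    {C : Chamber K V m // C.1 w = W} ≃ Chamber K W w × Chamber K (V ⧸ W) (m - w) where
  toFun C :=
    (⟨fun j => (C.1.1 j).comap W.subtype, by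
        refine ⟨fun a b hab => Submodule.comap_mono (chamber_mono C.1 hab),
          fun j hj => ?_, fun j hj => ?_⟩
        · have hle : C.1.1 j ≤ W := le_trans (chamber_mono C.1 hj) (le_of_eq C.2)
          rw [(Submodule.comapSubtypeEquivOfLe hle).finrank_eq]
          exact chamber_finrank C.1 (hj.trans hwm)
        · exact Submodule.comap_subtype_eq_top.mpr
            (le_trans (le_of_eq C.2.symm) (chamber_mono C.1 hj))⟩,
     ⟨fun j => (C.1.1 (w + j)).map W.mkQ, by
        refine ⟨fun a b hab => Submodule.map_mono (chamber_mono C.1 (Nat.add_le_add_left hab w)),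
          fun j hj => ?_, fun j hj => ?_⟩ <;> dsimp only
        · have hle : W ≤ C.1.1 (w + j) :=
            le_trans (le_of_eq C.2.symm) (chamber_mono C.1 (Nat.le_add_right w j))
          have h2 := finrank_map_mkQ hle
          rw [hw, chamber_finrank C.1 (show w + j ≤ m by omega)] at h2
          omega
        · rw [chamber_top C.1 (show m ≤ w + j by omega), Submodule.map_top,
            Submodule.range_mkQ]⟩)
  invFun ab :=
    ⟨⟨fun j => if j ≤ w then (ab.1.1 j).map W.subtype else (ab.2.1 (j - w)).comap W.mkQ, by
      refine ⟨fun j j' hjj => ?_, fun j hj => ?_, fun j hj => ?_⟩ <;> dsimp only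
      · rcases le_or_gt j' w with hj' | hj'
        · rw [if_pos (le_trans hjj hj'), if_pos hj']
          exact Submodule.map_mono (chamber_mono ab.1 hjj)
        · rw [if_neg (show ¬ j' ≤ w by omega)]
          rcases le_or_gt j w with hj | hj
          · rw [if_pos hj]
            exact le_trans (Submodule.map_subtype_le _ _) (Submodule.le_comap_mkQ _ _)
          · rw [if_neg (show ¬ j ≤ w by omega)]
            exact Submodule.comap_mono (chamber_mono ab.2 (Nat.sub_le_sub_right hjj w))
      · rcases le_or_gt j w with hjw | hjw
        · show finrank K (if j ≤ w then (ab.1.1 j).map W.subtype else (ab.2.1 (j - w)).comap W.mkQ : Submodule K V) = j; rw [if_pos hjw, ← (W.equivSubtypeMap (ab.1.1 j)).finrank_eq]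
          exact chamber_finrank ab.1 hjw
        · show finrank K (if j ≤ w then (ab.1.1 j).map W.subtype else (ab.2.1 (j - w)).comap W.mkQ : Submodule K V) = j; rw [if_neg (by omega), finrank_comap_mkQ,
            chamber_finrank ab.2 (show j - w ≤ m - w by omega), hw]
          omega
      · rcases le_or_gt j w with hjw | hjw
        · rw [if_pos hjw, chamber_top ab.1 (show w ≤ j by omega), Submodule.map_top,
            Submodule.range_subtype]
          exact Submodule.eq_top_of_finrank_eq (by omega)
        · rw [if_neg (by omega), chamber_top ab.2 (show m - w ≤ j - w by omega),
            Submodule.comap_top]⟩,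
     by dsimp only; rw [if_pos le_rfl, chamber_top ab.1 le_rfl, Submodule.map_top,
          Submodule.range_subtype]⟩
  left_inv := by
    intro C
    apply Subtype.ext; apply Subtype.ext; funext j
    dsimp only
    rcases le_or_gt j w with hj | hj
    · rw [if_pos hj, Submodule.map_comap_subtype]
      exact inf_eq_right.mpr (le_trans (chamber_mono C.1 hj) (le_of_eq C.2))
    · rw [if_neg (by omega), Nat.add_sub_cancel' (show w ≤ j by omega),
        Submodule.comap_map_mkQ]
      exact sup_eq_right.mpr
        (le_trans (le_of_eq C.2.symm) (chamber_mono C.1 (show w ≤ j by omega)))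
  right_inv := by
    rintro ⟨a, b⟩
    refine Prod.ext (Subtype.ext (funext fun j => ?_)) (Subtype.ext (funext fun j => ?_))
    · dsimp only
      rcases le_or_gt j w with hj | hj
      · rw [if_pos hj]
        exact Submodule.comap_map_eq_of_injective (Submodule.injective_subtype W) _
      · rw [if_neg (by omega), Submodule.comap_subtype_eq_top.mpr (Submodule.le_comap_mkQ W _),
          chamber_top a (by omega)]
    · dsimp only
      rcases Nat.eq_zero_or_pos j with hj | hj
      · subst hj
        rw [chamber_bot b, Nat.add_zero, if_pos le_rfl, chamber_top a le_rfl,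
          Submodule.map_top, Submodule.range_subtype]
        exact Submodule.mkQ_map_self W
      · rw [if_neg (by omega), Nat.add_sub_cancel_left,
          Submodule.map_comap_eq_of_surjective (Submodule.mkQ_surjective W)]



lemma natCard_sigma {ι : Type*} [Fintype ι] (f : ι → Type*) [∀ i, Finite (f i)] :
    Nat.card ((i : ι) × f i) = ∑ i, Nat.card (f i) := by
  letI : ∀ i, Fintype (f i) := fun i => Fintype.ofFinite _
  simp [Nat.card_eq_fintype_card]

lemma natCard_eq_sum_fibers {α ι : Type*} [Finite α] [Fintype ι] (ϕ : α → ι) :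
    Nat.card α = ∑ i, Nat.card {a : α // ϕ a = i} := by
  rw [← natCard_sigma]
  exact (Nat.card_congr (Equiv.sigmaFiberEquiv ϕ)).symm

/-- Master counting lemma for a split chamber with one condition below and one above. -/
lemma card_split (W : Submodule K V) {w m : ℕ} (hw : finrank K W = w)
    (hm : finrank K V = m) (hwm : w ≤ m)
    (Q : Submodule K W → Prop) (t : ℕ) (R : Submodule K (V ⧸ W) → Prop) (j : ℕ) :
    Nat.card {C : Chamber K V m //
        C.1 w = W ∧ Q ((C.1 t).comap W.subtype) ∧ R ((C.1 (w + j)).map W.mkQ)}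
      = Nat.card {a : Chamber K W w // Q (a.1 t)} *
        Nat.card {b : Chamber K (V ⧸ W) (m - w) // R (b.1 j)} := by
  rw [← Nat.card_prod]
  refine Nat.card_congr ?_
  exact ((Equiv.subtypeSubtypeEquivSubtypeInter
      (fun C : Chamber K V m => C.1 w = W)
      (fun C => Q ((C.1 t).comap W.subtype) ∧ R ((C.1 (w + j)).map W.mkQ))).symm.trans
    (Equiv.subtypeEquiv (chamberSplit W hw hm hwm) (fun X => Iff.rfl))).trans
    Equiv.subtypeProdEquivProd


lemma card_eq_split (W : Submodule K V) {w m : ℕ} (hw : finrank K W = w)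
    (hm : finrank K V = m) (hwm : w ≤ m) :
    Nat.card {C : Chamber K V m // C.1 w = W}
      = Nat.card (Chamber K W w) * Nat.card (Chamber K (V ⧸ W) (m - w)) := by
  have h := card_split W hw hm hwm (fun _ => True) 0 (fun _ => True) 0
  rw [Nat.card_congr (Equiv.subtypeUnivEquiv (fun _ => trivial)),
    Nat.card_congr (Equiv.subtypeUnivEquiv (fun _ => trivial))] at h
  rw [← h]
  exact Nat.card_congr (Equiv.subtypeEquivRight (fun C => by simp))

lemma card_cond_split_lower (W : Submodule K V) {w m : ℕ} (hw : finrank K W = w)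
    (hm : finrank K V = m) (hwm : w ≤ m) (Q : Submodule K W → Prop) (t : ℕ) :
    Nat.card {C : Chamber K V m // C.1 w = W ∧ Q ((C.1 t).comap W.subtype)}
      = Nat.card {a : Chamber K W w // Q (a.1 t)}
        * Nat.card (Chamber K (V ⧸ W) (m - w)) := by
  have h := card_split W hw hm hwm Q t (fun _ => True) 0
  rw [Nat.card_congr (Equiv.subtypeUnivEquiv (fun _ => trivial))] at h
  rw [← h]
  exact Nat.card_congr (Equiv.subtypeEquivRight (fun C => by simp))

lemma card_cond_split_upper (W : Submodule K V) {w m : ℕ} (hw : finrank K W = w)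
    (hm : finrank K V = m) (hwm : w ≤ m) (R : Submodule K (V ⧸ W) → Prop) (j : ℕ) :
    Nat.card {C : Chamber K V m // C.1 w = W ∧ R ((C.1 (w + j)).map W.mkQ)}
      = Nat.card (Chamber K W w)
        * Nat.card {b : Chamber K (V ⧸ W) (m - w) // R (b.1 j)} := by
  have h := card_split W hw hm hwm (fun _ => True) 0 R j
  rw [Nat.card_congr (Equiv.subtypeUnivEquiv (fun _ => trivial))] at h
  rw [← h]
  exact Nat.card_congr (Equiv.subtypeEquivRight (fun C => by simp))

/-- Transfer of a condition `P ≤ C_t` to the lower part of a split. -/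
lemma lower_le_iff {W P X : Submodule K V} (hPW : P ≤ W) (hXW : X ≤ W) :
    P ≤ X ↔ P.comap W.subtype ≤ X.comap W.subtype := by
  constructor
  · exact fun h => Submodule.comap_mono h
  · intro h
    have h2 := Submodule.map_mono (f := W.subtype) h
    rw [Submodule.map_comap_subtype, Submodule.map_comap_subtype,
      inf_eq_right.mpr hPW] at h2
    exact h2.trans inf_le_right

/-- Transfer of a condition `P ≤ C_u` to the upper part of a split. -/
lemma upper_le_iff {W P X : Submodule K V} (hWX : W ≤ X) :
    P ≤ X ↔ P.map W.mkQ ≤ X.map W.mkQ := by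
  constructor
  · exact fun h => Submodule.map_mono h
  · intro h
    have h2 := Submodule.comap_mono (f := W.mkQ) h
    rw [Submodule.comap_map_mkQ, Submodule.comap_map_mkQ, sup_eq_right.mpr hWX] at h2
    exact le_trans (le_trans le_sup_right h2) le_rfl

lemma point_inf_eq_bot [FiniteDimensional K V] {L P : Submodule K V}
    (hL : finrank K L = 1) (hP : finrank K P = 1) (hne : L ≠ P) : L ⊓ P = ⊥ := by
  by_contra h
  have h1 : 1 ≤ finrank K (L ⊓ P : Submodule K V) := by
    rw [Nat.one_le_iff_ne_zero]
    intro h0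
    exact h (Submodule.finrank_eq_zero.mp h0)
  have hL' : L ⊓ P = L := Submodule.eq_of_le_of_finrank_le inf_le_left (by omega)
  have hP' : L ⊓ P = P := Submodule.eq_of_le_of_finrank_le inf_le_right (by omega)
  exact hne (hL'.symm.trans hP')

lemma finrank_map_mkQ_point [FiniteDimensional K V] {L P : Submodule K V}
    (hP : finrank K P = 1) (h : L ⊓ P = ⊥) : finrank K (P.map L.mkQ) = 1 := by
  have h1 := LinearMap.finrank_range_add_finrank_ker (L.mkQ.domRestrict P)
  rw [LinearMap.range_domRestrict, LinearMap.ker_domRestrict, Submodule.ker_mkQ] at h1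
  have h2 : L.comap P.subtype = (L ⊓ P).comap P.subtype := by
    ext x; simp [Submodule.mem_comap, x.2]
  rw [h2, h, Submodule.comap_bot, Submodule.ker_subtype, finrank_bot, hP] at h1
  omega



/-- `Zq q m = ∏_{j=1}^m (q^j-1)/(q-1)` as a rational number. -/
def Zq (q m : ℕ) : ℚ := ∏ j ∈ Finset.Icc 1 m, (((q : ℚ) ^ j - 1) / ((q : ℚ) - 1))

lemma Zq_zero (q : ℕ) : Zq q 0 = 1 := by simp [Zq]

lemma Zq_succ (q m : ℕ) : Zq q (m + 1) = Zq q m * (((q : ℚ) ^ (m+1) - 1) / ((q : ℚ) - 1)) :=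
  Finset.prod_Icc_succ_top (by omega) _

lemma Zq_pos {q : ℕ} (hq : 2 ≤ q) (m : ℕ) : 0 < Zq q m := by
  have h1 : (1 : ℚ) < q := by exact_mod_cast hq
  refine Finset.prod_pos fun j hj => ?_
  have hj1 : j ≠ 0 := by simp at hj; omega
  exact div_pos (sub_pos.mpr (one_lt_pow₀ h1 hj1)) (sub_pos.mpr h1)

section Counting
universe u
variable {K : Type*} [Field K] [Fintype K]

lemma card_chamber_zero (V : Type u) [AddCommGroup V] [Module K V] [FiniteDimensional K V]
    (h : finrank K V = 0) : Nat.card (Chamber K V 0) = 1 := by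
  rw [Nat.card_eq_one_iff_unique]
  constructor
  · constructor
    intro C D
    apply Subtype.ext; funext j
    rw [chamber_top C (Nat.zero_le j), chamber_top D (Nat.zero_le j)]
  · exact ⟨⟨fun _ => ⊤, monotone_const, fun i hi => by
      simp only [Nat.le_zero] at hi; subst hi; rw [finrank_top, h], fun i _ => rfl⟩⟩

lemma card_chamber_one (V : Type u) [AddCommGroup V] [Module K V] [FiniteDimensional K V]
    (h : finrank K V = 1) : Nat.card (Chamber K V 1) = 1 := by
  rw [Nat.card_eq_one_iff_unique]
  constructor
  · constructor
    intro C D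
    apply Subtype.ext; funext j
    rcases Nat.eq_zero_or_pos j with hj | hj
    · subst hj; rw [chamber_bot C, chamber_bot D]
    · rw [chamber_top C hj, chamber_top D hj]
  · refine ⟨⟨fun j => if j = 0 then ⊥ else ⊤, ?_, ?_, ?_⟩⟩
    · intro a b hab
      dsimp only
      by_cases ha : a = 0
      · simp [ha]
      · rw [if_neg ha, if_neg (show ¬ b = 0 by omega)]
    · intro i hi
      dsimp only
      interval_cases i
      · simp
      · simpa [finrank_top] using h
    · intro i hi; dsimp only; rw [if_neg (show ¬ i = 0 by omega)]

/-- Counting the `1`-dimensional subspaces. -/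
lemma card_points_mul (V : Type u) [AddCommGroup V] [Module K V] [FiniteDimensional K V]
    {m : ℕ} (hm : finrank K V = m) :
    Nat.card {L : Submodule K V // finrank K L = 1} * (Fintype.card K - 1)
      = Fintype.card K ^ m - 1 := by
  have : Finite V := Module.finite_of_finite K
  letI : Fintype V := Fintype.ofFinite V
  letI : Fintype {L : Submodule K V // finrank K L = 1} := Fintype.ofFinite _
  have hcv : Nat.card {x : V // x ≠ 0} = Fintype.card K ^ m - 1 := by
    rw [Nat.card_eq_fintype_card, Fintype.card_subtype_compl (p := fun x : V => x = 0),
      Fintype.card_subtype_eq (0 : V), card_eq_pow_finrank (K := K) (V := V), hm]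
  have hfib : ∀ L : {L : Submodule K V // finrank K L = 1},
      Nat.card {x : {x : V // x ≠ 0} //
        (⟨Submodule.span K {x.1}, finrank_span_singleton x.2⟩ :
          {L : Submodule K V // finrank K L = 1}) = L}
        = Fintype.card K - 1 := by
    intro L
    have e : {x : {x : V // x ≠ 0} //
        (⟨Submodule.span K {x.1}, finrank_span_singleton x.2⟩ :
          {L : Submodule K V // finrank K L = 1}) = L} ≃ {y : L.1 // y ≠ 0} := by
      refine ⟨fun x => ⟨⟨x.1.1, ?_⟩, ?_⟩, fun y => ⟨⟨y.1.1, ?_⟩, ?_⟩, ?_, ?_⟩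
      · have hs : Submodule.span K {x.1.1} = L.1 := congrArg Subtype.val x.2
        exact hs ▸ Submodule.mem_span_singleton_self _
      · intro h0
        exact x.1.2 (by simpa using congrArg Subtype.val h0)
      · intro h0
        exact y.2 (Subtype.ext (by simpa using h0))
      · apply Subtype.ext
        exact ((Submodule.eq_of_le_of_finrank_eq
          ((Submodule.span_le (p := L.1)).mpr (by simpa using y.1.2))
          (by rw [finrank_span_singleton (by intro h0; exact y.2 (Subtype.ext (by simpa using h0))), L.2]))) 
      · intro x; apply Subtype.ext; apply Subtype.ext; rfl
      · intro y; apply Subtype.ext; apply Subtype.ext; rfl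
    rw [Nat.card_congr e]
    letI : Fintype L.1 := Fintype.ofFinite _
    rw [Nat.card_eq_fintype_card, Fintype.card_subtype_compl (p := fun y : L.1 => y = 0),
      Fintype.card_subtype_eq (0 : L.1), card_eq_pow_finrank (K := K) (V := L.1), L.2, pow_one]
  rw [natCard_eq_sum_fibers (fun x : {x : V // x ≠ 0} =>
    (⟨Submodule.span K {x.1}, finrank_span_singleton x.2⟩ :
      {L : Submodule K V // finrank K L = 1}))] at hcv
  rw [← hcv]
  rw [Finset.sum_congr rfl (fun L _ => hfib L), Finset.sum_const, smul_eq_mul,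
    Finset.card_univ,
    Nat.card_eq_fintype_card (α := {L : Submodule K V // finrank K L = 1})]

lemma card_chamber : ∀ (m : ℕ) (V : Type u) [AddCommGroup V] [Module K V]
    [FiniteDimensional K V], finrank K V = m →
    (Nat.card (Chamber K V m) : ℚ) = Zq (Fintype.card K) m := by
  intro m
  induction m with
  | zero =>
    intro V _ _ _ hm
    rw [card_chamber_zero V hm, Zq_zero]; norm_num
  | succ m ih =>
    intro V _ _ _ hm
    have hq2 : 2 ≤ Fintype.card K := Fintype.one_lt_card
    have hq1 : ((Fintype.card K : ℚ)) - 1 ≠ 0 := by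
      have : (2 : ℚ) ≤ (Fintype.card K : ℚ) := by exact_mod_cast hq2
      intro h; nlinarith
    letI : Fintype {L : Submodule K V // finrank K L = 1} := Fintype.ofFinite _
    rw [natCard_eq_sum_fibers (fun C : Chamber K V (m+1) =>
      (⟨C.1 1, chamber_finrank C (by omega)⟩ : {L : Submodule K V // finrank K L = 1}))]
    have hfib : ∀ L : {L : Submodule K V // finrank K L = 1},
        (Nat.card {C : Chamber K V (m+1) //
          (⟨C.1 1, chamber_finrank C (by omega)⟩ :
            {L : Submodule K V // finrank K L = 1}) = L} : ℚ)
          = Zq (Fintype.card K) m := by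
      intro L
      have h1 : Nat.card {C : Chamber K V (m+1) //
          (⟨C.1 1, chamber_finrank C (by omega)⟩ :
            {L : Submodule K V // finrank K L = 1}) = L}
          = Nat.card {C : Chamber K V (m+1) // C.1 1 = L.1} :=
        Nat.card_congr (Equiv.subtypeEquivRight (fun C => by
          rw [Subtype.ext_iff]))
      rw [h1, card_eq_split L.1 L.2 hm (by omega), card_chamber_one L.1 L.2]
      have hq : finrank K (V ⧸ L.1) = m := by
        have := Submodule.finrank_quotient_add_finrank L.1
        rw [hm, L.2] at this; omega
      rw [one_mul]
      exact ih (V ⧸ L.1) hq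
    push_cast
    rw [Finset.sum_congr rfl (fun L _ => hfib L), Finset.sum_const, nsmul_eq_mul,
      Finset.card_univ]
    have hpts := card_points_mul V hm
    have hptsQ : (Nat.card {L : Submodule K V // finrank K L = 1} : ℚ)
        * ((Fintype.card K : ℚ) - 1) = (Fintype.card K : ℚ) ^ (m+1) - 1 := by
      have h3 : 1 ≤ Fintype.card K ^ (m+1) := Nat.one_le_pow _ _ (by omega)
      have := congrArg (Nat.cast (R := ℚ)) hpts
      push_cast [Nat.cast_sub (show 1 ≤ Fintype.card K by omega), Nat.cast_sub h3] at this
      linarith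
    rw [Nat.card_eq_fintype_card] at hptsQ
    rw [Zq_succ]
    rw [show (Fintype.card {L : Submodule K V // finrank K L = 1} : ℚ)
        = ((Fintype.card K : ℚ) ^ (m+1) - 1) / ((Fintype.card K : ℚ) - 1) by
      field_simp
      linear_combination hptsQ]
    ring

lemma card_chamber_point : ∀ (t : ℕ), 1 ≤ t → ∀ (m : ℕ) (V : Type u) [AddCommGroup V]
    [Module K V] [FiniteDimensional K V], finrank K V = m →
    ∀ (P : Submodule K V), finrank K P = 1 → t ≤ m →
    (Nat.card {C : Chamber K V m // P ≤ C.1 t} : ℚ)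
        * ((Fintype.card K : ℚ) ^ m - 1)
      = Zq (Fintype.card K) m * ((Fintype.card K : ℚ) ^ t - 1) := by
  have hq2 : 2 ≤ Fintype.card K := Fintype.one_lt_card
  have hq2Q : (2 : ℚ) ≤ (Fintype.card K : ℚ) := by exact_mod_cast hq2
  have hq1 : ((Fintype.card K : ℚ)) - 1 ≠ 0 := by intro h; nlinarith
  intro t ht
  induction t, ht using Nat.le_induction with
  | base =>
    intro m V _ _ _ hm P hP htm
    obtain ⟨m', rfl⟩ : ∃ m', m = m' + 1 := ⟨m - 1, by omega⟩
    have hiff : ∀ C : Chamber K V (m'+1), (P ≤ C.1 1) ↔ (C.1 1 = P) := fun C =>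
      ⟨fun h => (Submodule.eq_of_le_of_finrank_eq h
          (by rw [hP, chamber_finrank C (by omega)])).symm,
        fun h => le_of_eq h.symm⟩
    rw [Nat.card_congr (Equiv.subtypeEquivRight hiff), card_eq_split P hP hm (by omega),
      card_chamber_one P hP]
    have hq : finrank K (V ⧸ P) = m' := by
      have := Submodule.finrank_quotient_add_finrank P
      rw [hm, hP] at this; omega
    push_cast
    rw [one_mul, card_chamber m' (V ⧸ P) hq, Zq_succ, pow_one]
    field_simp
  | succ t ht ih =>
    intro m V _ _ _ hm P hP htm
    obtain ⟨m', rfl⟩ : ∃ m', m = m' + 1 := ⟨m - 1, by omega⟩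
    have hm'1 : 1 ≤ m' := by omega
    have hqm' : ((Fintype.card K : ℚ) ^ m' - 1) ≠ 0 := by
      have : (2:ℚ) ≤ (Fintype.card K : ℚ) ^ m' := by
        calc (2:ℚ) ≤ (Fintype.card K : ℚ) := hq2Q
        _ ≤ (Fintype.card K : ℚ) ^ m' := by
            exact_mod_cast Nat.le_self_pow (by omega) (Fintype.card K)
      intro h; nlinarith
    letI : Fintype {L : Submodule K V // finrank K L = 1} := Fintype.ofFinite _
    rw [natCard_eq_sum_fibers (fun C : {C : Chamber K V (m'+1) // P ≤ C.1 (t+1)} =>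
      (⟨C.1.1 1, chamber_finrank C.1 (by omega)⟩ :
        {L : Submodule K V // finrank K L = 1}))]
    have hfib : ∀ L : {L : Submodule K V // finrank K L = 1},
        (Nat.card {x : {C : Chamber K V (m'+1) // P ≤ C.1 (t+1)} //
          (⟨x.1.1 1, chamber_finrank x.1 (by omega)⟩ :
            {L : Submodule K V // finrank K L = 1}) = L} : ℚ)
          = if L.1 = P then Zq (Fintype.card K) m'
            else Zq (Fintype.card K) m' * ((Fintype.card K : ℚ) ^ t - 1)
              / ((Fintype.card K : ℚ) ^ m' - 1) := by
      intro L
      have hq : finrank K (V ⧸ L.1) = m' := by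
        have := Submodule.finrank_quotient_add_finrank L.1
        rw [hm, L.2] at this; omega
      have h1 : Nat.card {x : {C : Chamber K V (m'+1) // P ≤ C.1 (t+1)} //
          (⟨x.1.1 1, chamber_finrank x.1 (by omega)⟩ :
            {L : Submodule K V // finrank K L = 1}) = L}
          = Nat.card {C : Chamber K V (m'+1) // C.1 1 = L.1 ∧
              (fun X => P.map L.1.mkQ ≤ X) ((C.1 (1 + t)).map L.1.mkQ)} := by
        refine Nat.card_congr ?_
        refine (Equiv.subtypeSubtypeEquivSubtypeInter
          (fun C : Chamber K V (m'+1) => P ≤ C.1 (t+1))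
          (fun C => (⟨C.1 1, chamber_finrank C (by omega)⟩ :
            {L : Submodule K V // finrank K L = 1}) = L)).trans
          (Equiv.subtypeEquivRight (fun C => ?_))
        rw [Subtype.ext_iff]
        constructor
        · rintro ⟨hle, h1⟩
          refine ⟨h1, ?_⟩
          have hle' : P ≤ C.1 (1 + t) := by rwa [Nat.add_comm 1 t]
          have hW : L.1 ≤ C.1 (1 + t) := le_trans (le_of_eq h1.symm)
            (chamber_mono C (by omega))
          exact (upper_le_iff hW).mp hle'
        · rintro ⟨h1, h2⟩
          refine ⟨?_, h1⟩
          have hW : L.1 ≤ C.1 (1 + t) := le_trans (le_of_eq h1.symm)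
            (chamber_mono C (by omega))
          have h3 := (upper_le_iff hW).mpr h2
          rwa [Nat.add_comm 1 t] at h3
      rw [h1, card_cond_split_upper L.1 L.2 hm (by omega) _ t,
        card_chamber_one L.1 L.2, one_mul]
      by_cases hLP : L.1 = P
      · rw [if_pos hLP]
        have hmap : P.map L.1.mkQ = ⊥ := by rw [hLP]; exact Submodule.mkQ_map_self P
        have he : Nat.card {b : Chamber K (V ⧸ L.1) m' // P.map L.1.mkQ ≤ b.1 t}
            = Nat.card (Chamber K (V ⧸ L.1) m') :=
          Nat.card_congr (Equiv.subtypeUnivEquiv (fun b => by rw [hmap]; exact bot_le))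
        show (Nat.card {b : Chamber K (V ⧸ L.1) m' // P.map L.1.mkQ ≤ b.1 t} : ℚ)
          = Zq (Fintype.card K) m'
        rw [he, card_chamber m' (V ⧸ L.1) hq]
      · rw [if_neg hLP]
        have hbot : L.1 ⊓ P = ⊥ := point_inf_eq_bot L.2 hP hLP
        have hPq : finrank K (P.map L.1.mkQ) = 1 := finrank_map_mkQ_point hP hbot
        have := ih m' (V ⧸ L.1) hq (P.map L.1.mkQ) hPq (by omega)
        rw [eq_div_iff hqm']
        exact this
    push_cast
    rw [Finset.sum_congr rfl (fun L _ => hfib L)]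
    rw [← Finset.add_sum_erase _ _ (Finset.mem_univ (⟨P, hP⟩ :
      {L : Submodule K V // finrank K L = 1}))]
    rw [if_pos rfl]
    have herase : ∀ L ∈ Finset.univ.erase (⟨P, hP⟩ :
        {L : Submodule K V // finrank K L = 1}),
        (if L.1 = P then Zq (Fintype.card K) m'
          else Zq (Fintype.card K) m' * ((Fintype.card K : ℚ) ^ t - 1)
            / ((Fintype.card K : ℚ) ^ m' - 1))
        = Zq (Fintype.card K) m' * ((Fintype.card K : ℚ) ^ t - 1)
            / ((Fintype.card K : ℚ) ^ m' - 1) := by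
      intro L hL
      rw [if_neg]
      intro h
      exact (Finset.mem_erase.mp hL).1 (Subtype.ext h)
    rw [Finset.sum_congr rfl herase, Finset.sum_const, nsmul_eq_mul,
      Finset.card_erase_of_mem (Finset.mem_univ _), Finset.card_univ]
    have hpts := card_points_mul V hm
    have h3 : 1 ≤ Fintype.card K ^ (m'+1) := Nat.one_le_pow _ _ (by omega)
    have hpts1 : 0 < Fintype.card {L : Submodule K V // finrank K L = 1} := by
      rw [Fintype.card_pos_iff]
      exact ⟨⟨P, hP⟩⟩
    have hptsQ : (Fintype.card {L : Submodule K V // finrank K L = 1} : ℚ)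
        * ((Fintype.card K : ℚ) - 1) = (Fintype.card K : ℚ) ^ (m'+1) - 1 := by
      rw [Nat.card_eq_fintype_card] at hpts
      have := congrArg (Nat.cast (R := ℚ)) hpts
      push_cast [Nat.cast_sub (show 1 ≤ Fintype.card K by omega), Nat.cast_sub h3] at this
      linarith
    have hcast : ((Fintype.card {L : Submodule K V // finrank K L = 1} - 1 : ℕ) : ℚ)
        = (Fintype.card {L : Submodule K V // finrank K L = 1} : ℚ) - 1 := by
      push_cast [Nat.cast_sub hpts1]; ring
    rw [hcast]
    have hNpts : (Fintype.card {L : Submodule K V // finrank K L = 1} : ℚ)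
        = ((Fintype.card K : ℚ) ^ (m'+1) - 1) / ((Fintype.card K : ℚ) - 1) := by
      field_simp
      linear_combination hptsQ
    rw [hNpts, Zq_succ]
    field_simp
    ring

/-- The number of complements of an `s`-dimensional subspace. -/
lemma card_compl (V : Type u) [AddCommGroup V] [Module K V] [FiniteDimensional K V]
    (S : Submodule K V) {m s : ℕ} (hm : finrank K V = m) (hs : finrank K S = s)
    (hsm : s ≤ m) :
    Nat.card {W : Submodule K V // S ⊓ W = ⊥ ∧ finrank K W = m - s}
      = Fintype.card K ^ (s * (m - s)) := by
  have hiff : ∀ W : Submodule K V, (S ⊓ W = ⊥ ∧ finrank K W = m - s) ↔ IsCompl S W := by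
    intro W
    constructor
    · rintro ⟨h1, h2⟩
      refine ⟨disjoint_iff.mpr h1, codisjoint_iff.mpr ?_⟩
      have h3 := Submodule.finrank_sup_add_finrank_inf_eq S W
      rw [h1, hs, h2, finrank_bot] at h3
      exact Submodule.eq_top_of_finrank_eq (by rw [hm]; omega)
    · intro h
      have h2 := Submodule.finrank_add_eq_of_isCompl h
      rw [hm, hs] at h2
      exact ⟨disjoint_iff.mp h.disjoint, by omega⟩
  obtain ⟨T, hT⟩ := Submodule.exists_isCompl S
  set f₀ : V →ₗ[K] S := S.linearProjOfIsCompl T hT with hf₀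
  have hf₀x : ∀ x : S, f₀ x = x := fun x => Submodule.linearProjOfIsCompl_apply_left hT x
  have e3 : {f : V →ₗ[K] S // ∀ x : S, f x = x} ≃ {g : V →ₗ[K] S // ∀ x : S, g x = 0} :=
    ⟨fun f => ⟨f.1 - f₀, fun x => by simp [LinearMap.sub_apply, f.2 x, hf₀x x]⟩,
     fun g => ⟨g.1 + f₀, fun x => by simp [LinearMap.add_apply, g.2 x, hf₀x x]⟩,
     fun f => Subtype.ext (by simp),
     fun g => Subtype.ext (by simp)⟩
  have e4 : {g : V →ₗ[K] S // ∀ x : S, g x = 0} ≃ ((V ⧸ S) →ₗ[K] S) := by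
    refine ⟨fun g => S.liftQ g.1 (fun x hx => ?_), fun h => ⟨h ∘ₗ S.mkQ, fun x => ?_⟩, ?_, ?_⟩
    · rw [LinearMap.mem_ker]
      exact g.2 ⟨x, hx⟩
    · have : S.mkQ x = 0 := (Submodule.Quotient.mk_eq_zero S).mpr x.2
      simp [LinearMap.comp_apply, this]
    · intro g
      apply Subtype.ext
      show (S.liftQ g.1 _).comp S.mkQ = g.1
      rw [Submodule.liftQ_mkQ]
    · intro h
      refine Submodule.linearMap_qext _ ?_
      show (S.liftQ (h ∘ₗ S.mkQ) _).comp S.mkQ = h.comp S.mkQ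
      rw [Submodule.liftQ_mkQ]
  have hcard : Nat.card {W : Submodule K V // S ⊓ W = ⊥ ∧ finrank K W = m - s}
      = Nat.card ((V ⧸ S) →ₗ[K] S) := by
    refine Nat.card_congr ?_
    exact ((Equiv.subtypeEquivRight hiff).trans (S.isComplEquivProj)).trans (e3.trans e4)
  rw [hcard]
  have : FiniteDimensional K ((V ⧸ S) →ₗ[K] S) := inferInstance
  have hfin : Finite ((V ⧸ S) →ₗ[K] S) := Module.finite_of_finite K
  letI : Fintype ((V ⧸ S) →ₗ[K] S) := Fintype.ofFinite _
  rw [Nat.card_eq_fintype_card, card_eq_pow_finrank (K := K) (V := (V ⧸ S) →ₗ[K] S),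
    Module.finrank_linearMap]
  congr 1
  have hq : finrank K (V ⧸ S) = m - s := by
    have := Submodule.finrank_quotient_add_finrank S
    rw [hm, hs] at this; omega
  rw [hq, hs, Nat.mul_comm]

end Counting

section Main
universe u
variable {K : Type*} [Field K] [Fintype K]

theorem main_aux (n s : ℕ) (hs1 : 1 ≤ s) (hsn : s ≤ n)
    (V : Type u) [AddCommGroup V] [Module K V] [FiniteDimensional K V]
    (hV : Module.finrank K V = 2 * n)
    [Fintype (Chamber K V (2 * n))]
    (S : Submodule K V) (hSdim : Module.finrank K S = s)
    (P : Submodule K V) (hP : Module.finrank K P = 1) (hPS : P ≤ S)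
    (i : ℕ) (hi1 : 1 ≤ i) (hin : i ≤ n) :
    ∑ C : Chamber K V (2 * n),
        (if C.1 s = S then ((Fintype.card K : ℚ) ^ (s * (2 * n - s) - n))
          else if S ⊓ C.1 (2 * n - s) = ⊥ then 1 else 0) *
          (if P ≤ C.1 n ∧ ¬ P ≤ C.1 (n - i) then (Fintype.card K : ℚ) ^ i
            else if P ≤ C.1 (n + i) ∧ ¬ P ≤ C.1 n then -1 else 0) = 0 := by
  classical
  have hq2 : 2 ≤ Fintype.card K := Fintype.one_lt_card
  have hq2Q : (2 : ℚ) ≤ (Fintype.card K : ℚ) := by exact_mod_cast hq2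
  have hSbot : S ≠ ⊥ := by
    intro h; rw [h, finrank_bot] at hSdim; omega
  have hPbot : P ≠ ⊥ := by
    intro h; rw [h, finrank_bot] at hP; omega
  -- pointwise identity
  have hpt : ∀ C : Chamber K V (2 * n),
      (if C.1 s = S then ((Fintype.card K : ℚ) ^ (s * (2 * n - s) - n))
        else if S ⊓ C.1 (2 * n - s) = ⊥ then 1 else 0) *
        (if P ≤ C.1 n ∧ ¬ P ≤ C.1 (n - i) then (Fintype.card K : ℚ) ^ i
          else if P ≤ C.1 (n + i) ∧ ¬ P ≤ C.1 n then -1 else 0)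
      = (if C.1 s = S ∧ ¬ P ≤ C.1 (n - i) then
          ((Fintype.card K : ℚ) ^ (s * (2 * n - s) - n) * (Fintype.card K : ℚ) ^ i) else 0)
        + (if S ⊓ C.1 (2 * n - s) = ⊥ ∧ P ≤ C.1 (n + i) then (-1 : ℚ) else 0) := by
    intro C
    by_cases h1 : C.1 s = S
    · have hPn : P ≤ C.1 n :=
        le_trans hPS (le_trans (le_of_eq h1.symm) (chamber_mono C hsn))
      have hSr : ¬ (S ⊓ C.1 (2 * n - s) = ⊥) := by
        intro h
        have hS : S ≤ C.1 (2 * n - s) :=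
          le_trans (le_of_eq h1.symm) (chamber_mono C (by omega))
        rw [inf_eq_left.mpr hS] at h
        exact hSbot h
      rw [if_pos h1,
        if_neg (fun hc : S ⊓ C.1 (2*n-s) = ⊥ ∧ P ≤ C.1 (n+i) => hSr hc.1)]
      by_cases h2 : P ≤ C.1 (n - i)
      · rw [if_neg (fun hc : P ≤ C.1 n ∧ ¬ P ≤ C.1 (n-i) => hc.2 h2),
          if_neg (fun hc : P ≤ C.1 (n+i) ∧ ¬ P ≤ C.1 n => hc.2 hPn),
          if_neg (fun hc : C.1 s = S ∧ ¬ P ≤ C.1 (n-i) => hc.2 h2)]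
        ring
      · rw [if_pos (show P ≤ C.1 n ∧ ¬ P ≤ C.1 (n-i) from ⟨hPn, h2⟩),
          if_pos (show C.1 s = S ∧ ¬ P ≤ C.1 (n-i) from ⟨h1, h2⟩)]
        ring
    · rw [if_neg h1, if_neg (fun hc : C.1 s = S ∧ ¬ P ≤ C.1 (n-i) => h1 hc.1)]
      by_cases h3 : S ⊓ C.1 (2 * n - s) = ⊥
      · have hPn' : ¬ P ≤ C.1 n := by
          intro h
          have hle : P ≤ S ⊓ C.1 (2 * n - s) :=
            le_inf hPS (le_trans h (chamber_mono C (by omega)))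
          rw [h3] at hle
          exact hPbot (le_bot_iff.mp hle)
        rw [if_pos h3, if_neg (fun hc : P ≤ C.1 n ∧ ¬ P ≤ C.1 (n-i) => hPn' hc.1)]
        by_cases h4 : P ≤ C.1 (n + i)
        · rw [if_pos (show P ≤ C.1 (n+i) ∧ ¬ P ≤ C.1 n from ⟨h4, hPn'⟩),
            if_pos (show S ⊓ C.1 (2*n-s) = ⊥ ∧ P ≤ C.1 (n+i) from ⟨h3, h4⟩)]
          ring
        · rw [if_neg (fun hc : P ≤ C.1 (n+i) ∧ ¬ P ≤ C.1 n => h4 hc.1),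
            if_neg (fun hc : S ⊓ C.1 (2*n-s) = ⊥ ∧ P ≤ C.1 (n+i) => h4 hc.2)]
          ring
      · rw [if_neg h3,
          if_neg (fun hc : S ⊓ C.1 (2*n-s) = ⊥ ∧ P ≤ C.1 (n+i) => h3 hc.1)]
        ring
  rw [Finset.sum_congr rfl (fun C _ => hpt C), Finset.sum_add_distrib]
  -- counting sums of indicators
  have hsum : ∀ (c : ℚ) (p : Chamber K V (2 * n) → Prop),
      (∑ C : Chamber K V (2 * n), if p C then c else 0)
        = (Nat.card {C : Chamber K V (2 * n) // p C} : ℚ) * c := by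
    intro c p
    rw [← Finset.sum_filter, Finset.sum_const, nsmul_eq_mul]
    congr 2
    rw [Nat.card_eq_fintype_card, Fintype.card_subtype]
  have hsum1 : (∑ C : Chamber K V (2 * n), if C.1 s = S ∧ ¬ P ≤ C.1 (n - i) then
        ((Fintype.card K : ℚ) ^ (s * (2 * n - s) - n) * (Fintype.card K : ℚ) ^ i) else 0)
      = (Nat.card {C : Chamber K V (2 * n) // C.1 s = S ∧ ¬ P ≤ C.1 (n - i)} : ℚ)
        * ((Fintype.card K : ℚ) ^ (s * (2 * n - s) - n) * (Fintype.card K : ℚ) ^ i) := by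
    convert hsum _ _ using 2 with C
    congr!
  have hsum2 : (∑ C : Chamber K V (2 * n), if S ⊓ C.1 (2 * n - s) = ⊥ ∧ P ≤ C.1 (n + i)
        then (-1 : ℚ) else 0)
      = (Nat.card {C : Chamber K V (2 * n) //
          S ⊓ C.1 (2 * n - s) = ⊥ ∧ P ≤ C.1 (n + i)} : ℚ) * (-1) := by
    convert hsum _ _ using 2 with C
    congr!
  rw [hsum1, hsum2]
  rcases le_or_gt (s + i) n with hsmall | hbig
  · -- small case : both sets empty
    have hA0 : Nat.card {C : Chamber K V (2 * n) //
        C.1 s = S ∧ ¬ P ≤ C.1 (n - i)} = 0 := by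
      have : IsEmpty {C : Chamber K V (2 * n) // C.1 s = S ∧ ¬ P ≤ C.1 (n - i)} :=
        ⟨fun x => x.2.2 (le_trans hPS (le_trans (le_of_eq x.2.1.symm)
          (chamber_mono x.1 (by omega))))⟩
      exact Nat.card_of_isEmpty
    have hB0 : Nat.card {C : Chamber K V (2 * n) //
        S ⊓ C.1 (2 * n - s) = ⊥ ∧ P ≤ C.1 (n + i)} = 0 := by
      have : IsEmpty {C : Chamber K V (2 * n) //
          S ⊓ C.1 (2 * n - s) = ⊥ ∧ P ≤ C.1 (n + i)} := by
        refine ⟨fun x => ?_⟩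
        have hle : P ≤ S ⊓ x.1.1 (2 * n - s) :=
          le_inf hPS (le_trans x.2.2 (chamber_mono x.1 (by omega)))
        rw [x.2.1] at hle
        exact hPbot (le_bot_iff.mp hle)
      exact Nat.card_of_isEmpty
    rw [hA0, hB0]
    norm_num
  · -- big case : n < s + i
    have hq1 : (Fintype.card K : ℚ) - 1 ≠ 0 := by intro h; nlinarith
    have hqsQ : (2:ℚ) ≤ (Fintype.card K : ℚ) ^ s := by
      calc (2:ℚ) ≤ (Fintype.card K : ℚ) := hq2Q
      _ ≤ (Fintype.card K : ℚ) ^ s := by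
          exact_mod_cast Nat.le_self_pow (by omega) (Fintype.card K)
    have hqs1 : (Fintype.card K : ℚ) ^ s - 1 ≠ 0 := by intro h; nlinarith
    have hrdim : finrank K (V ⧸ S) = 2 * n - s := by
      have := Submodule.finrank_quotient_add_finrank S
      rw [hV, hSdim] at this; omega
    set P' : Submodule K S := P.comap S.subtype with hP'def
    have hP' : finrank K P' = 1 := by
      rw [hP'def, (Submodule.comapSubtypeEquivOfLe hPS).finrank_eq, hP]
    -- A-side
    have hAeq : Nat.card {C : Chamber K V (2*n) // C.1 s = S ∧ ¬ P ≤ C.1 (n - i)}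
        = Nat.card {a : Chamber K S s // ¬ P' ≤ a.1 (n - i)}
          * Nat.card (Chamber K (V ⧸ S) (2*n - s)) := by
      rw [← card_cond_split_lower S hSdim hV (by omega) (fun X => ¬ P' ≤ X) (n - i)]
      refine Nat.card_congr (Equiv.subtypeEquivRight fun C => ?_)
      constructor
      · rintro ⟨h1, h2⟩
        exact ⟨h1, fun hc => h2 ((lower_le_iff hPS
          (le_trans (chamber_mono C (by omega)) (le_of_eq h1))).mpr hc)⟩
      · rintro ⟨h1, h2⟩
        exact ⟨h1, fun hc => h2 ((lower_le_iff hPS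
          (le_trans (chamber_mono C (by omega)) (le_of_eq h1))).mp hc)⟩
    have hZr : (Nat.card (Chamber K (V ⧸ S) (2*n - s)) : ℚ)
        = Zq (Fintype.card K) (2*n - s) := card_chamber _ _ hrdim
    have hZsS : (Nat.card (Chamber K S s) : ℚ) = Zq (Fintype.card K) s :=
      card_chamber _ _ hSdim
    have hcompl : Nat.card {a : Chamber K S s // ¬ P' ≤ a.1 (n - i)}
        + Nat.card {a : Chamber K S s // P' ≤ a.1 (n - i)}
        = Nat.card (Chamber K S s) := by
      letI : Fintype (Chamber K S s) := Fintype.ofFinite _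
      classical
      have h1 := Fintype.card_subtype_compl (p := fun a : Chamber K S s => P' ≤ a.1 (n - i))
      have h2 := Fintype.card_subtype_le (p := fun a : Chamber K S s => P' ≤ a.1 (n - i))
      rw [Nat.card_eq_fintype_card, Nat.card_eq_fintype_card, Nat.card_eq_fintype_card]
      omega
    have hH : (Nat.card {a : Chamber K S s // P' ≤ a.1 (n - i)} : ℚ)
          * ((Fintype.card K : ℚ) ^ s - 1)
        = Zq (Fintype.card K) s * ((Fintype.card K : ℚ) ^ (n - i) - 1) := by
      rcases Nat.eq_zero_or_pos (n - i) with ht0 | ht1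
      · rw [ht0]
        have hE : IsEmpty {a : Chamber K S s // P' ≤ a.1 0} := by
          refine ⟨fun a => ?_⟩
          have hb : a.1.1 0 = ⊥ := chamber_bot a.1
          have h2 := a.2
          rw [hb, le_bot_iff] at h2
          rw [h2, finrank_bot] at hP'
          omega
        rw [Nat.card_of_isEmpty]
        norm_num
      · exact card_chamber_point (n - i) ht1 s S hSdim P' hP' (by omega)
    -- B-side
    letI : Fintype {W : Submodule K V // S ⊓ W = ⊥ ∧ finrank K W = 2*n - s} :=
      Fintype.ofFinite _
    have hBsplit : Nat.card {C : Chamber K V (2*n) //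
          S ⊓ C.1 (2*n - s) = ⊥ ∧ P ≤ C.1 (n + i)}
        = ∑ W : {W : Submodule K V // S ⊓ W = ⊥ ∧ finrank K W = 2*n - s},
            Nat.card {C : Chamber K V (2*n) // C.1 (2*n - s) = W.1 ∧
              (fun X => P.map W.1.mkQ ≤ X) ((C.1 ((2*n - s) + (s + i - n))).map W.1.mkQ)} := by
      rw [natCard_eq_sum_fibers (fun x : {C : Chamber K V (2*n) //
          S ⊓ C.1 (2*n - s) = ⊥ ∧ P ≤ C.1 (n + i)} =>
        (⟨x.1.1 (2*n - s), x.2.1, chamber_finrank x.1 (by omega)⟩ :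
          {W : Submodule K V // S ⊓ W = ⊥ ∧ finrank K W = 2*n - s}))]
      refine Finset.sum_congr rfl (fun W _ => Nat.card_congr ?_)
      have hfwd : ∀ a : {x : {C : Chamber K V (2*n) //
            S ⊓ C.1 (2*n - s) = ⊥ ∧ P ≤ C.1 (n + i)} //
          (⟨x.1.1 (2*n - s), x.2.1, chamber_finrank x.1 (by omega)⟩ :
            {W : Submodule K V // S ⊓ W = ⊥ ∧ finrank K W = 2*n - s}) = W},
          a.1.1.1 (2*n - s) = W.1 ∧ (fun X => P.map W.1.mkQ ≤ X)
            ((a.1.1.1 ((2*n - s) + (s + i - n))).map W.1.mkQ) := by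
        intro a
        have hW1 : a.1.1.1 (2*n - s) = W.1 := congrArg Subtype.val a.2
        refine ⟨hW1, ?_⟩
        have hWle : W.1 ≤ a.1.1.1 ((2*n - s) + (s + i - n)) :=
          le_trans (le_of_eq hW1.symm) (chamber_mono a.1.1 (Nat.le_add_right _ _))
        have hle' : P ≤ a.1.1.1 ((2*n - s) + (s + i - n)) := by
          rw [show (2*n - s) + (s + i - n) = n + i by omega]
          exact a.1.2.2
        exact (upper_le_iff hWle).mp hle'
      have hinv : ∀ y : {C : Chamber K V (2*n) // C.1 (2*n - s) = W.1 ∧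
          (fun X => P.map W.1.mkQ ≤ X) ((C.1 ((2*n - s) + (s + i - n))).map W.1.mkQ)},
          S ⊓ y.1.1 (2*n - s) = ⊥ ∧ P ≤ y.1.1 (n + i) := by
        intro y
        constructor
        · have h := W.2.1
          rw [← y.2.1] at h
          exact h
        · have hWle : W.1 ≤ y.1.1 ((2*n - s) + (s + i - n)) :=
            le_trans (le_of_eq y.2.1.symm) (chamber_mono y.1 (Nat.le_add_right _ _))
          have hle' := (upper_le_iff hWle).mpr y.2.2
          exact le_trans hle' (le_of_eq (congrArg y.1.1
            (by omega : (2*n - s) + (s + i - n) = n + i)))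
      exact ⟨fun a => ⟨a.1.1, hfwd a⟩, fun y => ⟨⟨y.1, hinv y⟩, Subtype.ext y.2.1⟩,
        fun a => Subtype.ext (Subtype.ext rfl), fun y => Subtype.ext rfl⟩
    -- value of each B-fiber
    have hfibB : ∀ W : {W : Submodule K V // S ⊓ W = ⊥ ∧ finrank K W = 2*n - s},
        (Nat.card {C : Chamber K V (2*n) // C.1 (2*n - s) = W.1 ∧
            (fun X => P.map W.1.mkQ ≤ X)
              ((C.1 ((2*n - s) + (s + i - n))).map W.1.mkQ)} : ℚ)
          = Zq (Fintype.card K) (2*n - s)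
            * (Zq (Fintype.card K) s * ((Fintype.card K : ℚ) ^ (s + i - n) - 1)
                / ((Fintype.card K : ℚ) ^ s - 1)) := by
      intro W
      have hqW : finrank K (V ⧸ W.1) = s := by
        have := Submodule.finrank_quotient_add_finrank W.1
        rw [hV, W.2.2] at this; omega
      have hWP : W.1 ⊓ P = ⊥ := by
        have h1 : W.1 ⊓ P ≤ S ⊓ W.1 := le_inf (le_trans inf_le_right hPS) inf_le_left
        rw [W.2.1] at h1
        exact le_bot_iff.mp h1
      have hPq : finrank K (P.map W.1.mkQ) = 1 := finrank_map_mkQ_point hP hWP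
      rw [card_cond_split_upper W.1 W.2.2 hV (by omega)
        (fun X => P.map W.1.mkQ ≤ X) (s + i - n)]
      push_cast
      rw [card_chamber (2*n - s) W.1 W.2.2]
      congr 1
      rw [show 2*n - (2*n - s) = s by omega]
      have hpoint := card_chamber_point (s + i - n) (by omega) s
        (V ⧸ W.1) hqW (P.map W.1.mkQ) hPq (by omega)
      rw [eq_div_iff hqs1]
      exact hpoint
    -- assemble
    have hNB : (Nat.card {C : Chamber K V (2*n) //
          S ⊓ C.1 (2*n - s) = ⊥ ∧ P ≤ C.1 (n + i)} : ℚ)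
        = (Fintype.card K : ℚ) ^ (s * (2*n - s))
          * (Zq (Fintype.card K) (2*n - s)
            * (Zq (Fintype.card K) s * ((Fintype.card K : ℚ) ^ (s + i - n) - 1)
                / ((Fintype.card K : ℚ) ^ s - 1))) := by
      rw [hBsplit]
      push_cast
      rw [Finset.sum_congr rfl (fun W _ => hfibB W), Finset.sum_const, nsmul_eq_mul]
      have hcardΩ : (((Finset.univ :
            Finset {W : Submodule K V // S ⊓ W = ⊥ ∧ finrank K W = 2*n - s}).card) : ℚ)
          = (Fintype.card K : ℚ) ^ (s * (2*n - s)) := by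
        rw [Finset.card_univ, ← Nat.card_eq_fintype_card,
          card_compl V S hV hSdim (by omega)]
        push_cast
        ring
      rw [hcardΩ]
    have hNH : (Nat.card {a : Chamber K S s // P' ≤ a.1 (n - i)} : ℚ)
        = Zq (Fintype.card K) s * ((Fintype.card K : ℚ) ^ (n - i) - 1)
          / ((Fintype.card K : ℚ) ^ s - 1) := by
      rw [eq_div_iff hqs1]; exact hH
    have hNA1 : (Nat.card {a : Chamber K S s // ¬ P' ≤ a.1 (n - i)} : ℚ)
        = Zq (Fintype.card K) s
          - Zq (Fintype.card K) s * ((Fintype.card K : ℚ) ^ (n - i) - 1)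
            / ((Fintype.card K : ℚ) ^ s - 1) := by
      have := congrArg (Nat.cast (R := ℚ)) hcompl
      push_cast at this
      rw [hZsS] at this
      rw [← hNH]
      linarith
    have hEn : n ≤ s * (2*n - s) := by
      have h1 : n ≤ 2*n - s := by omega
      calc n ≤ 2*n - s := h1
      _ ≤ s * (2*n - s) := Nat.le_mul_of_pos_left _ (by omega)
    have hexp : s * (2*n - s) - n + i + (n - i) = s * (2*n - s) := by
      revert hEn; generalize s * (2*n - s) = E; intro hEn; omega
    have hpow1 : (Fintype.card K : ℚ) ^ (s * (2*n - s) - n) * (Fintype.card K : ℚ) ^ i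
          * (Fintype.card K : ℚ) ^ (n - i) = (Fintype.card K : ℚ) ^ (s * (2*n - s)) := by
      rw [← pow_add, ← pow_add, hexp]
    have hpow2 : (Fintype.card K : ℚ) ^ (n - i) * (Fintype.card K : ℚ) ^ (s + i - n)
        = (Fintype.card K : ℚ) ^ s := by
      rw [← pow_add]; congr 1; omega
    push_cast [hAeq]
    rw [hZr, hNA1, hNB, ← hpow1, ← hpow2]
    have hqtk1 : (Fintype.card K : ℚ) ^ (n - i) * (Fintype.card K : ℚ) ^ (s + i - n) - 1 ≠ 0 := by
      rw [hpow2]; exact hqs1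
    field_simp
    ring

end Main
end ChamberProof


/-- for `1 ≤ s ≤ n`, an `s`-subspace `S` and a `1`-subspace `P ≤ S`,
the function `v_S` is orthogonal to `χ^i_P` for every `i ∈ {1,…,n}`. -/
theorem subspace_antidesign_orthogonal (q n s : ℕ) (hs1 : 1 ≤ s) (hsn : s ≤ n)
    (K V : Type*) [Field K] [Fintype K]
    [AddCommGroup V] [Module K V] [FiniteDimensional K V]
    (hK : Fintype.card K = q) (hV : Module.finrank K V = 2 * n)
    [Fintype (Chamber K V (2 * n))]
    (S : Submodule K V) (hSdim : Module.finrank K S = s)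
    (P : Submodule K V) (hP : Module.finrank K P = 1) (hPS : P ≤ S)
    (i : ℕ) (hi1 : 1 ≤ i) (hin : i ≤ n) :
    ∑ C : Chamber K V (2 * n),
        (if C.1 s = S then ((q : ℚ) ^ (s * (2 * n - s) - n))
          else if S ⊓ C.1 (2 * n - s) = ⊥ then 1 else 0) *
          (if P ≤ C.1 n ∧ ¬ P ≤ C.1 (n - i) then (q : ℚ) ^ i
            else if P ≤ C.1 (n + i) ∧ ¬ P ≤ C.1 n then -1 else 0) = 0 := by
  subst hK
  exact ChamberProof.main_aux n s hs1 hsn V hV S hSdim P hP hPS i hi1 hin
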